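/- Let Z be a real Hilbert space, let T̂, Â : Z → Z, B̂ : Z → ℝ^q, Ĉ : ℝ^r → Z be bounded linear operators and D̂ : ℝ^r → ℝ^q linear, and let γ > 0 and P : Z → Z be a bounded self-adjoint coercive linear operator (i.e., ⟨x, P x⟩ ≥ α‖x‖² for some α > 0 and all x). Suppose that for all v ∈ ℝ^r, u ∈ ℝ^q, x ∈ Z: −γ‖v‖² − γ‖u‖² + 2⟨v, D̂* u⟩ + 2⟨v, Ĉ* P T̂ x⟩ + 2⟨u, B̂ x⟩ + ⟨x, (T̂* P Â + Â* P T̂) x⟩ ≤ 0. Then for every continuous square-integrable w : [0,∞) → ℝ^r and every differentiable x : [0,∞) → Z with x(0) = 0 and T̂ x'(t) = Â x(t) + Ĉ w(t) for all t ≥ 0, the output z(t) := B̂ x(t) + D̂ w(t) satisfies ∫₀^∞ ‖z(t)‖² dt ≤ γ² ∫₀^∞ ‖w(t)‖² dt. -/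

import Mathlib

open MeasureTheory Filter Topology ContinuousLinearMap
open scoped RealInnerProductSpace

lemma Hinf_aux_pointwise
    {Z : Type*} [NormedAddCommGroup Z] [InnerProductSpace ℝ Z] [CompleteSpace Z]
    {q r : ℕ}
    (That Ahat : Z →L[ℝ] Z)
    (Bhat : Z →L[ℝ] EuclideanSpace ℝ (Fin q))
    (Chat : EuclideanSpace ℝ (Fin r) →L[ℝ] Z)
    (Dhat : EuclideanSpace ℝ (Fin r) →L[ℝ] EuclideanSpace ℝ (Fin q))
    (γ : ℝ) (hγ : 0 < γ)
    (P : Z →L[ℝ] Z) (hPsa : IsSelfAdjoint P)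
    (hLPI : ∀ (v : EuclideanSpace ℝ (Fin r)) (u : EuclideanSpace ℝ (Fin q)) (x : Z),
      -γ * ‖v‖^2 - γ * ‖u‖^2 + 2 * ⟪v, (adjoint Dhat) u⟫
        + 2 * ⟪v, (adjoint Chat) (P (That x))⟫ + 2 * ⟪u, Bhat x⟫
        + ⟪x, ((adjoint That).comp (P.comp Ahat)
              + (adjoint Ahat).comp (P.comp That)) x⟫ ≤ 0)
    (a : Z) (ww : EuclideanSpace ℝ (Fin r)) :
    2 * ⟪Ahat a + Chat ww, P (That a)⟫
      ≤ γ * ‖ww‖^2 - (1/γ) * ‖Bhat a + Dhat ww‖^2 := by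
  set zz := Bhat a + Dhat ww with hzz
  have hPsym : ∀ u v : Z, ⟪P u, v⟫ = ⟪u, P v⟫ := by
    intro u v
    conv_lhs => rw [← hPsa.adjoint_eq]
    exact ContinuousLinearMap.adjoint_inner_left P v u
  have H := hLPI ww ((1/γ) • zz) a
  have e1 : ⟪ww, adjoint Dhat ((1/γ) • zz)⟫ = (1/γ) * ⟪zz, Dhat ww⟫ := by
    rw [_root_.map_smul, real_inner_smul_right, ContinuousLinearMap.adjoint_inner_right,
      real_inner_comm]
  have e2 : ⟪ww, adjoint Chat (P (That a))⟫ = ⟪Chat ww, P (That a)⟫ := by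
    rw [ContinuousLinearMap.adjoint_inner_right]
  have e3 : ⟪(1/γ) • zz, Bhat a⟫ = (1/γ) * ⟪zz, Bhat a⟫ := by
    rw [real_inner_smul_left]
  have e4 : ⟪a, ((adjoint That).comp (P.comp Ahat)
      + (adjoint Ahat).comp (P.comp That)) a⟫ = 2 * ⟪Ahat a, P (That a)⟫ := by
    rw [ContinuousLinearMap.add_apply, inner_add_right]
    simp only [ContinuousLinearMap.comp_apply]
    rw [ContinuousLinearMap.adjoint_inner_right, ContinuousLinearMap.adjoint_inner_right]
    rw [← hPsym (That a) (Ahat a), real_inner_comm (P (That a)) (Ahat a)]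
    ring
  have e5 : ⟪zz, Bhat a⟫ + ⟪zz, Dhat ww⟫ = ‖zz‖^2 := by
    rw [← inner_add_right, ← hzz, real_inner_self_eq_norm_sq]
  have e6 : ‖(1/γ) • zz‖^2 = (1/γ)^2 * ‖zz‖^2 := by
    rw [norm_smul, mul_pow, Real.norm_eq_abs, sq_abs]
  have e7 : 2 * ⟪Ahat a + Chat ww, P (That a)⟫
      = 2 * ⟪Ahat a, P (That a)⟫ + 2 * ⟪Chat ww, P (That a)⟫ := by
    rw [inner_add_left]; ring
  rw [e1, e2, e3, e4, e6] at H
  have hγ' : γ * ((1/γ)^2 * ‖zz‖^2) = (1/γ) * ‖zz‖^2 := by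
    field_simp
  have h4 : (2/γ) * ‖zz‖^2 = 2 * ((1/γ) * ‖zz‖^2) := by ring
  rw [e7]
  have h2 : (2:ℝ) * ((1/γ) * ⟪zz, Dhat ww⟫) + 2 * ((1/γ) * ⟪zz, Bhat a⟫)
      = (2/γ) * ‖zz‖^2 := by
    rw [show (2:ℝ) * ((1/γ) * ⟪zz, Dhat ww⟫) + 2 * ((1/γ) * ⟪zz, Bhat a⟫)
        = (2/γ) * (⟪zz, Bhat a⟫ + ⟪zz, Dhat ww⟫) by ring, e5]
  linarith [H, h2, hγ', h4]

/-- Intermediate conclusion in the appendix proof of the H∞ controller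
synthesis LPI (Theorem 16): the block quadratic-form inequality with `P`
self-adjoint, bounded and coercive implies the L₂-gain bound `γ` for the
system `T̂ ẋ = Â x + Ĉ w`, `z = B̂ x + D̂ w` with zero initial condition. -/
theorem Hinf_L2_gain_from_LPI
    {Z : Type*} [NormedAddCommGroup Z] [InnerProductSpace ℝ Z] [CompleteSpace Z]
    {q r : ℕ}
    (That Ahat : Z →L[ℝ] Z)
    (Bhat : Z →L[ℝ] EuclideanSpace ℝ (Fin q))
    (Chat : EuclideanSpace ℝ (Fin r) →L[ℝ] Z)
    (Dhat : EuclideanSpace ℝ (Fin r) →L[ℝ] EuclideanSpace ℝ (Fin q))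
    (γ : ℝ) (hγ : 0 < γ)
    (P : Z →L[ℝ] Z) (hPsa : IsSelfAdjoint P)
    (hPcoer : ∃ α > (0:ℝ), ∀ x : Z, α * ‖x‖^2 ≤ ⟪x, P x⟫)
    (hLPI : ∀ (v : EuclideanSpace ℝ (Fin r)) (u : EuclideanSpace ℝ (Fin q)) (x : Z),
      -γ * ‖v‖^2 - γ * ‖u‖^2 + 2 * ⟪v, (adjoint Dhat) u⟫
        + 2 * ⟪v, (adjoint Chat) (P (That x))⟫ + 2 * ⟪u, Bhat x⟫
        + ⟪x, ((adjoint That).comp (P.comp Ahat)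
              + (adjoint Ahat).comp (P.comp That)) x⟫ ≤ 0) :
    ∀ w : ℝ → EuclideanSpace ℝ (Fin r),
      ContinuousOn w (Set.Ici (0:ℝ)) →
      IntegrableOn (fun t => ‖w t‖^2) (Set.Ici (0:ℝ)) →
      ∀ x : ℝ → Z, (∀ t ∈ Set.Ici (0:ℝ), DifferentiableAt ℝ x t) → x 0 = 0 →
      (∀ t ∈ Set.Ici (0:ℝ), That (deriv x t) = Ahat (x t) + Chat (w t)) →
      (∫ t in Set.Ici (0:ℝ), ‖Bhat (x t) + Dhat (w t)‖^2)
        ≤ γ^2 * ∫ t in Set.Ici (0:ℝ), ‖w t‖^2 := by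
  intro w hwc hwint x hx hx0 hode
  obtain ⟨α, hα, hcoer⟩ := hPcoer
  set z : ℝ → EuclideanSpace ℝ (Fin q) := fun t => Bhat (x t) + Dhat (w t) with hz
  set V : ℝ → ℝ := fun t => ⟪That (x t), P (That (x t))⟫ with hV
  set g : ℝ → ℝ := fun t => γ * ‖w t‖^2 - (1/γ) * ‖z t‖^2 with hg
  have hPsym : ∀ u v : Z, ⟪P u, v⟫ = ⟪u, P v⟫ := by
    intro u v
    conv_lhs => rw [← hPsa.adjoint_eq]
    exact ContinuousLinearMap.adjoint_inner_left P v u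
  have hxc : ContinuousOn x (Set.Ici 0) :=
    fun t ht => (hx t ht).continuousAt.continuousWithinAt
  have hzc2 : ContinuousOn (fun t => ‖z t‖^2) (Set.Ici 0) := by
    exact (((Bhat.continuous.comp_continuousOn hxc).add
      (Dhat.continuous.comp_continuousOn hwc)).norm).pow 2
  have hwc2 : ContinuousOn (fun t => ‖w t‖^2) (Set.Ici 0) := (hwc.norm).pow 2
  have hgc : ContinuousOn g (Set.Ici 0) :=
    (continuousOn_const.mul hwc2).sub (continuousOn_const.mul hzc2)
  have hVnn : ∀ t, 0 ≤ V t := fun t =>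
    le_trans (by positivity) (hcoer (That (x t)))
  have hV0 : V 0 = 0 := by simp [hV, hx0]
  have hVd : ∀ t ∈ Set.Ici (0:ℝ),
      HasDerivAt V (2 * ⟪Ahat (x t) + Chat (w t), P (That (x t))⟫) t := by
    intro t ht
    have hx' := (hx t ht).hasDerivAt
    have hy : HasDerivAt (fun s => That (x s)) (That (deriv x t)) t :=
      That.hasFDerivAt.comp_hasDerivAt t hx'
    have hPy : HasDerivAt (fun s => P (That (x s))) (P (That (deriv x t))) t :=
      P.hasFDerivAt.comp_hasDerivAt t hy
    have hD := hy.inner ℝ hPy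
    have heq : ⟪That (x t), P (That (deriv x t))⟫ + ⟪That (deriv x t), P (That (x t))⟫
        = 2 * ⟪Ahat (x t) + Chat (w t), P (That (x t))⟫ := by
      have c1 : ⟪That (x t), P (That (deriv x t))⟫ = ⟪That (deriv x t), P (That (x t))⟫ := by
        rw [← hPsym (That (x t)) (That (deriv x t))]
        exact real_inner_comm _ _
      rw [c1, hode t ht]
      ring
    exact heq ▸ hD
  have hbound : ∀ t ∈ Set.Ici (0:ℝ),
      2 * ⟪Ahat (x t) + Chat (w t), P (That (x t))⟫ ≤ g t :=
    fun t _ => Hinf_aux_pointwise That Ahat Bhat Chat Dhat γ hγ P hPsa hLPI (x t) (w t)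
  -- main interval bound
  have key : ∀ T, 0 ≤ T →
      ∫ t in (0:ℝ)..T, ‖z t‖^2 ≤ γ^2 * ∫ t in (0:ℝ)..T, ‖w t‖^2 := by
    intro T hT
    have hIcc : Set.Icc (0:ℝ) T ⊆ Set.Ici 0 := Set.Icc_subset_Ici_self
    have hgci : IntegrableOn g (Set.Icc 0 T) :=
      (hgc.mono hIcc).integrableOn_compact isCompact_Icc
    have huIcc : Set.uIcc (0:ℝ) T = Set.Icc 0 T := Set.uIcc_of_le hT
    have hprim : ContinuousOn (fun u => ∫ s in (0:ℝ)..u, g s) (Set.Icc 0 T) := by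
      have := intervalIntegral.continuousOn_primitive_interval
        (a := 0) (b := T) (f := g) (μ := volume) (by rw [huIcc]; exact hgci)
      rwa [huIcc] at this
    set h : ℝ → ℝ := fun u => V u - ∫ s in (0:ℝ)..u, g s with hh
    have hanti : AntitoneOn h (Set.Icc 0 T) := by
      apply antitoneOn_of_deriv_nonpos (convex_Icc 0 T)
      · have hVc : ContinuousOn V (Set.Icc 0 T) :=
          fun t ht => ((hVd t (hIcc ht)).continuousAt).continuousWithinAt
        exact hVc.sub hprim
      · intro t ht
        rw [interior_Icc] at ht
        have hpt : HasDerivAt (fun u => ∫ s in (0:ℝ)..u, g s) (g t) t := by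
          refine intervalIntegral.integral_hasDerivAt_right ?_ ?_ ?_
          · apply ContinuousOn.intervalIntegrable
            refine hgc.mono ?_
            rw [Set.uIcc_of_le ht.1.le]
            exact le_trans Set.Icc_subset_Ici_self le_rfl
          · exact ContinuousOn.stronglyMeasurableAtFilter isOpen_Ioi
              (hgc.mono Set.Ioi_subset_Ici_self) t ht.1
          · exact hgc.continuousAt (Ici_mem_nhds ht.1)
        exact (((hVd t (Set.mem_Ici.mpr ht.1.le)).sub hpt).differentiableAt).differentiableWithinAt
      · intro t ht
        rw [interior_Icc] at ht
        have hpt : HasDerivAt (fun u => ∫ s in (0:ℝ)..u, g s) (g t) t := by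
          refine intervalIntegral.integral_hasDerivAt_right ?_ ?_ ?_
          · apply ContinuousOn.intervalIntegrable
            refine hgc.mono ?_
            rw [Set.uIcc_of_le ht.1.le]
            exact le_trans Set.Icc_subset_Ici_self le_rfl
          · exact ContinuousOn.stronglyMeasurableAtFilter isOpen_Ioi
              (hgc.mono Set.Ioi_subset_Ici_self) t ht.1
          · exact hgc.continuousAt (Ici_mem_nhds ht.1)
        have hd : HasDerivAt h
            (2 * ⟪Ahat (x t) + Chat (w t), P (That (x t))⟫ - g t) t :=
          (hVd t (Set.mem_Ici.mpr ht.1.le)).sub hpt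
        rw [hd.deriv]
        have := hbound t (Set.mem_Ici.mpr ht.1.le)
        linarith
    have hhT : h T ≤ h 0 :=
      hanti (Set.left_mem_Icc.mpr hT) (Set.right_mem_Icc.mpr hT) hT
    have hh0 : h 0 = 0 := by simp [hh, hV0]
    have hVT : V T ≤ ∫ s in (0:ℝ)..T, g s := by
      have := hhT; rw [hh0] at this; simp only [hh] at this; linarith
    have hwint' : IntervalIntegrable (fun t => ‖w t‖^2) volume 0 T := by
      apply ContinuousOn.intervalIntegrable
      rw [huIcc]; exact hwc2.mono hIcc
    have hzint' : IntervalIntegrable (fun t => ‖z t‖^2) volume 0 T := by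
      apply ContinuousOn.intervalIntegrable
      rw [huIcc]; exact hzc2.mono hIcc
    have hsplit : ∫ s in (0:ℝ)..T, g s
        = γ * (∫ s in (0:ℝ)..T, ‖w s‖^2) - (1/γ) * ∫ s in (0:ℝ)..T, ‖z s‖^2 := by
      rw [hg]
      rw [intervalIntegral.integral_sub (hwint'.const_mul γ) (hzint'.const_mul (1/γ)),
        intervalIntegral.integral_const_mul, intervalIntegral.integral_const_mul]
    have h1 : (1/γ) * (∫ s in (0:ℝ)..T, ‖z s‖^2) ≤ γ * ∫ s in (0:ℝ)..T, ‖w s‖^2 := by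
      have h0 := hVnn T
      rw [hsplit] at hVT
      linarith
    have := mul_le_mul_of_nonneg_left h1 hγ.le
    calc ∫ t in (0:ℝ)..T, ‖z t‖^2
        = γ * ((1/γ) * ∫ s in (0:ℝ)..T, ‖z s‖^2) := by field_simp
      _ ≤ γ * (γ * ∫ s in (0:ℝ)..T, ‖w s‖^2) := this
      _ = γ^2 * ∫ t in (0:ℝ)..T, ‖w t‖^2 := by ring
  -- pass to the improper integral
  have hwint2 : IntegrableOn (fun t => ‖w t‖^2) (Set.Ioi 0) :=
    Iff.mp integrableOn_Ici_iff_integrableOn_Ioi hwint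
  have hwmono : ∀ T, 0 ≤ T →
      ∫ t in (0:ℝ)..T, ‖w t‖^2 ≤ ∫ t in Set.Ioi (0:ℝ), ‖w t‖^2 := by
    intro T hT
    rw [intervalIntegral.integral_of_le hT]
    apply setIntegral_mono_set hwint2
    · exact Eventually.of_forall fun t => by positivity
    · exact HasSubset.Subset.eventuallyLE Set.Ioc_subset_Ioi_self
  set I : ℝ := γ^2 * ∫ t in Set.Ioi (0:ℝ), ‖w t‖^2 with hI
  have hbnd : ∀ T, 0 ≤ T → ∫ t in (0:ℝ)..T, ‖z t‖^2 ≤ I := by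
    intro T hT
    refine le_trans (key T hT) ?_
    have := hwmono T hT
    nlinarith [sq_nonneg γ]
  have hfi : ∀ i : ℝ, IntegrableOn (fun t => ‖z t‖^2) (Set.Ioc 0 i) := by
    intro i
    rcases le_or_gt 0 i with hi | hi
    · exact ((hzc2.mono (le_trans Set.Icc_subset_Ici_self le_rfl)).integrableOn_compact
        (isCompact_Icc (a := 0) (b := i))).mono_set Set.Ioc_subset_Icc_self
    · rw [Set.Ioc_eq_empty (by exact fun hlt => absurd hi (not_lt.mpr hlt.le))]
      exact integrableOn_empty
  have hzint : IntegrableOn (fun t => ‖z t‖^2) (Set.Ioi 0) := by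
    refine integrableOn_Ioi_of_intervalIntegral_norm_bounded I 0 hfi
      (tendsto_id (α := ℝ)) ?_
    filter_upwards [eventually_ge_atTop (0:ℝ)] with i hi
    have : (∫ t in (0:ℝ)..i, ‖(fun t => ‖z t‖^2) t‖) = ∫ t in (0:ℝ)..i, ‖z t‖^2 := by
      apply intervalIntegral.integral_congr
      intro s _
      simp [Real.norm_eq_abs, abs_of_nonneg (by positivity : (0:ℝ) ≤ ‖z s‖^2)]
    rw [this]
    exact hbnd i hi
  have htend := intervalIntegral_tendsto_integral_Ioi 0 hzint
    (tendsto_id (α := ℝ))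
  rw [show (∫ t in Set.Ici (0:ℝ), ‖Bhat (x t) + Dhat (w t)‖^2)
      = ∫ t in Set.Ioi (0:ℝ), ‖z t‖^2 from integral_Ici_eq_integral_Ioi,
    show (∫ t in Set.Ici (0:ℝ), ‖w t‖^2) = ∫ t in Set.Ioi (0:ℝ), ‖w t‖^2
      from integral_Ici_eq_integral_Ioi]
  refine le_of_tendsto htend ?_
  filter_upwards [eventually_ge_atTop (0:ℝ)] with i hi
  exact hbnd i hi
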